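/- arXiv:1710.09809 — 3 statements merged into one kernel-verified Lean document; each statement's English description precedes it below -/
import Mathlib

section
/- Let t, c ∈ R^m with ‖t‖ = 1 and δ ∈ [-1, 1]. Then the maximum of ⟨a, c⟩ over the dome T^d(t, δ) = {a : ⟨a, t⟩ ≥ δ, ‖a‖ ≤ 1} equals max_{δ ≤ α ≤ 1} ( α⟨t, c⟩ + √(1 - α²)·‖P(c)‖ ), where P(c) = c - ⟨t, c⟩t is the projection of c onto the orthogonal complement of t. -/
theorem dome_max_reduction (m : ℕ) (t c : EuclideanSpace ℝ (Fin m)) (δ : ℝ)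
    (ht : ‖t‖ = 1) (hδ : δ ∈ Set.Icc (-1 : ℝ) 1) :
    sSup ((fun a => (inner ℝ a c : ℝ)) ''
        {a : EuclideanSpace ℝ (Fin m) | δ ≤ (inner ℝ a t : ℝ) ∧ ‖a‖ ≤ 1}) =
      sSup ((fun α => α * (inner ℝ t c : ℝ) +
        Real.sqrt (1 - α ^ 2) * ‖c - (inner ℝ t c : ℝ) • t‖) '' Set.Icc δ 1) := by
  set P : EuclideanSpace ℝ (Fin m) := c - (inner ℝ t c : ℝ) • t with hPdef
  have htt : (inner ℝ t t : ℝ) = 1 := by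
    rw [real_inner_self_eq_norm_sq, ht]; norm_num
  have hPt : (inner ℝ P t : ℝ) = 0 := by
    rw [hPdef, inner_sub_left, real_inner_smul_left, htt, real_inner_comm c t]
    ring
  have htP : (inner ℝ t P : ℝ) = 0 := by rw [real_inner_comm]; exact hPt
  have hPc : (inner ℝ P c : ℝ) = ‖P‖ ^ 2 := by
    have hc : c = P + (inner ℝ t c : ℝ) • t := by simp [hPdef]
    calc (inner ℝ P c : ℝ) = inner ℝ P (P + (inner ℝ t c : ℝ) • t) := by rw [← hc]
      _ = inner ℝ P P + (inner ℝ t c : ℝ) * inner ℝ P t := by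
          rw [inner_add_right, real_inner_smul_right]
      _ = ‖P‖ ^ 2 := by rw [hPt, real_inner_self_eq_norm_sq]; ring
  apply csSup_eq_csSup_of_forall_exists_le
  · rintro x ⟨a, ⟨hat, ha1⟩, rfl⟩
    have hα1 : (inner ℝ a t : ℝ) ≤ 1 := by
      calc (inner ℝ a t : ℝ) ≤ ‖a‖ * ‖t‖ := real_inner_le_norm a t
        _ ≤ 1 := by rw [ht]; simpa using ha1
    refine ⟨_, ⟨(inner ℝ a t : ℝ), ⟨hat, hα1⟩, rfl⟩, ?_⟩
    set α := (inner ℝ a t : ℝ) with hαdef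
    set w : EuclideanSpace ℝ (Fin m) := a - α • t with hwdef
    have hwt : (inner ℝ w t : ℝ) = 0 := by
      rw [hwdef, inner_sub_left, real_inner_smul_left, htt, mul_one]
      exact sub_eq_zero_of_eq hαdef.symm
    have htw : (inner ℝ t w : ℝ) = 0 := by rw [real_inner_comm]; exact hwt
    have haw : a = α • t + w := by simp [hwdef]
    have hw2 : ‖w‖ ^ 2 ≤ 1 - α ^ 2 := by
      have hsq : ‖a‖ ^ 2 = α ^ 2 + ‖w‖ ^ 2 := by
        rw [haw, norm_add_sq_real, real_inner_smul_left, htw, norm_smul, ht,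
          Real.norm_eq_abs]
        rw [mul_zero, mul_zero, mul_one, sq_abs]
        ring
      have ha2 : ‖a‖ ^ 2 ≤ 1 := by nlinarith [norm_nonneg a]
      nlinarith
    have h1 : (inner ℝ a c : ℝ) = α * inner ℝ t c + inner ℝ w c := by
      rw [haw, inner_add_left, real_inner_smul_left]
    have h2 : (inner ℝ w c : ℝ) = inner ℝ w P := by
      rw [hPdef, inner_sub_right, real_inner_smul_right, hwt, mul_zero, sub_zero]
    have h3 : (inner ℝ w P : ℝ) ≤ ‖w‖ * ‖P‖ := real_inner_le_norm w P
    have h4 : ‖w‖ ≤ Real.sqrt (1 - α ^ 2) := by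
      rw [← Real.sqrt_sq (norm_nonneg w)]
      exact Real.sqrt_le_sqrt hw2
    have h5 : ‖w‖ * ‖P‖ ≤ Real.sqrt (1 - α ^ 2) * ‖P‖ :=
      mul_le_mul_of_nonneg_right h4 (norm_nonneg P)
    show (inner ℝ a c : ℝ) ≤ α * inner ℝ t c + Real.sqrt (1 - α ^ 2) * ‖P‖
    rw [h1, h2]
    linarith
  · rintro x ⟨α, ⟨hδα, hα1⟩, rfl⟩
    have hαm1 : -1 ≤ α := le_trans hδ.1 hδα
    have h1α : 0 ≤ 1 - α ^ 2 := by nlinarith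
    by_cases hP0 : P = 0
    · refine ⟨_, ⟨α • t, ⟨?_, ?_⟩, rfl⟩, ?_⟩
      · show δ ≤ (inner ℝ (α • t) t : ℝ)
        rw [real_inner_smul_left, htt, mul_one]; exact hδα
      · rw [norm_smul, ht, mul_one, Real.norm_eq_abs, abs_le]; exact ⟨hαm1, hα1⟩
      · show α * (inner ℝ t c : ℝ) + Real.sqrt (1 - α ^ 2) * ‖P‖ ≤ (inner ℝ (α • t) c : ℝ)
        rw [real_inner_smul_left, hP0, norm_zero, mul_zero, add_zero]
    · set s : ℝ := Real.sqrt (1 - α ^ 2) / ‖P‖ with hsdef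
      have hPn : (0:ℝ) < ‖P‖ := norm_pos_iff.mpr hP0
      have hsP : s * ‖P‖ = Real.sqrt (1 - α ^ 2) := div_mul_cancel₀ _ hPn.ne'
      refine ⟨_, ⟨α • t + s • P, ⟨?_, ?_⟩, rfl⟩, ?_⟩
      · show δ ≤ (inner ℝ (α • t + s • P) t : ℝ)
        rw [inner_add_left, real_inner_smul_left, real_inner_smul_left, htt, hPt]
        simpa using hδα
      · have hn2 : ‖α • t + s • P‖ ^ 2 = 1 := by
          rw [norm_add_sq_real, real_inner_smul_left, real_inner_smul_right, htP,
            norm_smul, norm_smul, ht, Real.norm_eq_abs, Real.norm_eq_abs]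
          have hs0 : |s| = s := abs_of_nonneg (div_nonneg (Real.sqrt_nonneg _) hPn.le)
          rw [hs0, mul_zero, mul_zero, mul_zero, mul_one, mul_pow, sq_abs,
            ← mul_pow, hsP, Real.sq_sqrt h1α]
          ring
        have : ‖α • t + s • P‖ = 1 := by
          rw [← Real.sqrt_sq (norm_nonneg _), hn2, Real.sqrt_one]
        rw [this]
      · show α * (inner ℝ t c : ℝ) + Real.sqrt (1 - α ^ 2) * ‖P‖ ≤
          (inner ℝ (α • t + s • P) c : ℝ)
        rw [inner_add_left, real_inner_smul_left, real_inner_smul_left, hPc]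
        have : s * ‖P‖ ^ 2 = Real.sqrt (1 - α ^ 2) * ‖P‖ := by
          rw [sq, ← mul_assoc, hsP]
        rw [this]
end

section
/- Let t, c ∈ R^m with ‖t‖ = 1, c ≠ 0, and let τ satisfy ⟨t, c⟩ < τ ≤ ‖c‖. Let δ ∈ [-1, 1]. Then max_{a ∈ T^d(t, δ)} ⟨a, c⟩ < τ if and only if δ > ( ⟨t,c⟩τ + √(‖c‖² - ⟨t,c⟩²)·√(‖c‖² - τ²) ) / ‖c‖². -/
lemma jdt_le_of_sq_le_sq (a b : ℝ) (hb : 0 ≤ b) (h : a^2 ≤ b^2) (ha : 0 ≤ a) : a ≤ b := by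
  nlinarith [sq_nonneg (a-b), sq_nonneg (a+b)]

lemma jdt_key2 (n s τ k l : ℝ) (hn : 0 < n) (hk : 0 ≤ k) (hl : 0 ≤ l)
    (hk2 : k^2 = n^2 - s^2) (hl2 : l^2 = n^2 - τ^2) (hsτ : s < τ) :
    s * l ≤ k * τ := by
  rcases le_or_gt s 0 with hs | hs
  · rcases le_or_gt 0 τ with hτ | hτ
    · have h1 : s * l ≤ 0 := mul_nonpos_of_nonpos_of_nonneg hs hl
      have h2 : 0 ≤ k * τ := mul_nonneg hk hτ
      linarith
    · have hs' : s < 0 := hsτ.trans hτ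
      have hts : τ^2 ≤ s^2 := by nlinarith [mul_pos (sub_pos.2 hsτ) (show (0:ℝ) < -s-τ by linarith)]
      have h1 : (k*(-τ))^2 ≤ ((-s)*l)^2 := by
        have e1 : (k*(-τ))^2 = (n^2-s^2)*τ^2 := by rw [← hk2]; ring
        have e2 : ((-s)*l)^2 = s^2*(n^2-τ^2) := by rw [← hl2]; ring
        nlinarith [mul_le_mul_of_nonneg_left hts (by positivity : (0:ℝ) ≤ n^2)]
      have h2 : k*(-τ) ≤ (-s)*l :=
        jdt_le_of_sq_le_sq _ _ (mul_nonneg (by linarith) hl) h1 (mul_nonneg hk (by linarith))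
      linarith
  · have hτ' : 0 < τ := hs.trans hsτ
    have hts : s^2 ≤ τ^2 := by nlinarith
    have h1 : (s*l)^2 ≤ (k*τ)^2 := by
      have e1 : (k*τ)^2 = (n^2-s^2)*τ^2 := by rw [← hk2]; ring
      have e2 : (s*l)^2 = s^2*(n^2-τ^2) := by rw [← hl2]; ring
      nlinarith [mul_le_mul_of_nonneg_left hts (by positivity : (0:ℝ) ≤ n^2)]
    exact jdt_le_of_sq_le_sq _ _ (mul_nonneg hk hτ'.le) h1 (mul_nonneg hs.le hl)

lemma jdt_key (n s τ k l α : ℝ) (hn : 0 < n) (hk : 0 ≤ k) (hl : 0 ≤ l)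
    (hk2 : k^2 = n^2 - s^2) (hl2 : l^2 = n^2 - τ^2) (hsτ : s < τ)
    (hα1 : -1 ≤ α) (hα2 : α ≤ 1) (hf : τ ≤ s*α + k*Real.sqrt (1-α^2)) :
    n^2*α ≤ s*τ + k*l := by
  have h1 : (0:ℝ) ≤ 1 - α^2 := by nlinarith
  have hsq : Real.sqrt (1-α^2)^2 = 1-α^2 := Real.sq_sqrt h1
  have hkey2 : s * l ≤ k * τ := jdt_key2 n s τ k l hn hk hl hk2 hl2 hsτ
  rcases le_or_gt (τ - s*α) 0 with h | h
  · have hs0 : s < 0 := by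
      by_contra hs0; push_neg at hs0
      nlinarith
    have h2 : s^2*α ≤ s*τ := by nlinarith
    have h3 : k^2*α ≤ k*l := by nlinarith [mul_le_mul_of_nonneg_left hkey2 hk]
    nlinarith
  · have hf' : τ - s*α ≤ k*Real.sqrt (1-α^2) := by linarith
    have h2 : (τ - s*α)^2 ≤ k^2*(1-α^2) := by
      have := mul_le_mul hf' hf' h.le (mul_nonneg hk (Real.sqrt_nonneg _))
      nlinarith [Real.sqrt_nonneg (1-α^2)]
    by_contra hcon
    push_neg at hcon
    have h3 : k*l < n^2*α - s*τ := by linarith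
    have h4 : (k*l)^2 < (n^2*α - s*τ)^2 := by
      nlinarith [mul_nonneg hk hl]
    have hid : n^2*(τ - s*α)^2 - n^2*(k^2*(1-α^2)) = (n^2*α - s*τ)^2 - (k*l)^2 := by
      linear_combination (n^2*α^2 - τ^2) * hk2 + k^2 * hl2
    have h5 := mul_le_mul_of_nonneg_left h2 (sq_nonneg n)
    linarith

theorem joint_dome_test (m : ℕ) (t c : EuclideanSpace ℝ (Fin m)) (τ δ : ℝ)
    (ht : ‖t‖ = 1) (hc : c ≠ 0) (hτ₁ : (inner ℝ t c : ℝ) < τ) (hτ₂ : τ ≤ ‖c‖)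
    (hδ : δ ∈ Set.Icc (-1 : ℝ) 1) :
    sSup ((fun a => (inner ℝ a c : ℝ)) ''
        {a : EuclideanSpace ℝ (Fin m) | δ ≤ (inner ℝ a t : ℝ) ∧ ‖a‖ ≤ 1}) < τ ↔
      δ > ((inner ℝ t c : ℝ) * τ +
        Real.sqrt (‖c‖ ^ 2 - (inner ℝ t c : ℝ) ^ 2) * Real.sqrt (‖c‖ ^ 2 - τ ^ 2)) / ‖c‖ ^ 2 := by
  set s : ℝ := (inner ℝ t c : ℝ) with hs_def
  set n : ℝ := ‖c‖ with hn_def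
  have hn : 0 < n := norm_pos_iff.2 hc
  have hs_abs : |s| ≤ n := by
    have := abs_real_inner_le_norm t c
    rwa [ht, one_mul] at this
  have hsn1 : -n ≤ s := (abs_le.1 hs_abs).1
  have hsn2 : s ≤ n := (abs_le.1 hs_abs).2
  set k : ℝ := Real.sqrt (n^2 - s^2) with hk_def
  set l : ℝ := Real.sqrt (n^2 - τ^2) with hl_def
  have hk2 : k^2 = n^2 - s^2 := Real.sq_sqrt (by nlinarith)
  have hl2 : l^2 = n^2 - τ^2 := Real.sq_sqrt (by nlinarith)
  have hk0 : 0 ≤ k := Real.sqrt_nonneg _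
  have hl0 : 0 ≤ l := Real.sqrt_nonneg _
  -- the vector w
  set w : EuclideanSpace ℝ (Fin m) := c - s • t with hw_def
  have htt : (inner ℝ t t : ℝ) = 1 := by
    rw [real_inner_self_eq_norm_sq, ht]; norm_num
  have htw : (inner ℝ t w : ℝ) = 0 := by
    rw [hw_def, inner_sub_right, real_inner_smul_right, htt]
    simp [hs_def]
  have hwt : (inner ℝ w t : ℝ) = 0 := by rw [← real_inner_comm w t]; exact htw
  have hwc : (inner ℝ w c : ℝ) = k^2 := by
    rw [hw_def, inner_sub_left, real_inner_smul_left, real_inner_self_eq_norm_sq,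
      ← hn_def, ← hs_def, hk2]; ring
  have hww2 : (inner ℝ w w : ℝ) = k^2 := by
    rw [hw_def, inner_sub_right, real_inner_smul_right]
    rw [show (inner ℝ (c - s • t) c : ℝ) = k^2 from hw_def ▸ hwc,
      show (inner ℝ (c - s • t) t : ℝ) = 0 from hw_def ▸ hwt]; ring
  have hww : ‖w‖ = k := by
    have h2 : ‖w‖^2 = k^2 := by rw [← real_inner_self_eq_norm_sq, hww2]
    nlinarith [norm_nonneg w]
  -- the dome set
  set S : Set (EuclideanSpace ℝ (Fin m)) :=
    {a : EuclideanSpace ℝ (Fin m) | δ ≤ (inner ℝ a t : ℝ) ∧ ‖a‖ ≤ 1} with hS_def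
  have hS_closed : IsClosed S := by
    have h1 : IsClosed {a : EuclideanSpace ℝ (Fin m) | δ ≤ (inner ℝ a t : ℝ)} :=
      isClosed_le continuous_const (Continuous.inner continuous_id continuous_const)
    have h2 : IsClosed {a : EuclideanSpace ℝ (Fin m) | ‖a‖ ≤ 1} :=
      isClosed_le continuous_norm continuous_const
    exact h1.inter h2
  have hS_cpt : IsCompact S := by
    refine (isCompact_closedBall (0 : EuclideanSpace ℝ (Fin m)) 1).of_isClosed_subset hS_closed ?_
    intro a ha
    simpa [Metric.mem_closedBall, dist_zero_right] using ha.2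
  have hS_ne : S.Nonempty := ⟨t, by
    constructor
    · rw [htt]; exact hδ.2
    · rw [ht]⟩
  have hIm_cpt : IsCompact ((fun a => (inner ℝ a c : ℝ)) '' S) :=
    hS_cpt.image (Continuous.inner continuous_id continuous_const)
  have hbdd : BddAbove ((fun a => (inner ℝ a c : ℝ)) '' S) := hIm_cpt.bddAbove
  have hmem : sSup ((fun a => (inner ℝ a c : ℝ)) '' S) ∈ (fun a => (inner ℝ a c : ℝ)) '' S :=
    hIm_cpt.sSup_mem (hS_ne.image _)
  constructor
  · -- sSup < τ → δ > δ₀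
    intro hsup
    by_contra hle
    push_neg at hle
    set δ₀ : ℝ := (s*τ + k*l)/n^2 with hδ₀_def
    set r : ℝ := (k*τ - s*l)/n^2 with hr_def
    have hkey2 : s*l ≤ k*τ := jdt_key2 n s τ k l hn hk0 hl0 hk2 hl2 hτ₁
    have hr0 : 0 ≤ r := div_nonneg (by linarith) (by positivity)
    have hsum : (s*τ+k*l)^2 + (k*τ-s*l)^2 = n^2*n^2 := by
      linear_combination n^2*hk2 + (k^2+s^2)*hl2
    have hn2 : (n:ℝ)^2 ≠ 0 := by positivity
    have hid : δ₀^2 + r^2 = 1 := by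
      rw [hδ₀_def, hr_def]
      field_simp
      linear_combination hsum
    set a₀ : EuclideanSpace ℝ (Fin m) := δ₀ • t + (r/k) • w with ha₀_def
    have ha₀t : (inner ℝ a₀ t : ℝ) = δ₀ := by
      rw [ha₀_def, inner_add_left, real_inner_smul_left, real_inner_smul_left, hwt, htt]
      ring
    have hrkk : r/k*k^2 = r*k := by
      rcases eq_or_ne k 0 with h | h
      · rw [h]; ring
      · field_simp
    have ha₀c : (inner ℝ a₀ c : ℝ) = τ := by
      rw [ha₀_def, inner_add_left, real_inner_smul_left, real_inner_smul_left, ← hs_def, hwc,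
        hrkk, hδ₀_def, hr_def]
      field_simp
      linear_combination τ * hk2
    have ha₀norm : ‖a₀‖ ≤ 1 := by
      have h1 : ‖a₀‖^2 = δ₀^2 + (r/k)^2*k^2 := by
        rw [ha₀_def, norm_add_sq_real, norm_smul, norm_smul, real_inner_smul_left,
          real_inner_smul_right, htw, ht, hww, Real.norm_eq_abs, Real.norm_eq_abs]
        rw [mul_one, mul_pow, sq_abs, sq_abs]
        ring
      have h2 : (r/k)^2*k^2 ≤ r^2 := by
        rcases eq_or_ne k 0 with h | h
        · rw [h]
          simp
          positivity
        · have he : (r/k)^2*k^2 = r^2 := by field_simp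
          rw [he]
      refine jdt_le_of_sq_le_sq _ _ zero_le_one ?_ (norm_nonneg _)
      rw [one_pow, h1]
      linarith
    have ha₀S : a₀ ∈ S := by
      refine ⟨?_, ha₀norm⟩
      rw [ha₀t]
      exact hle
    have hτle : τ ≤ sSup ((fun a => (inner ℝ a c : ℝ)) '' S) :=
      le_csSup hbdd ⟨a₀, ha₀S, ha₀c⟩
    linarith
  · -- δ > δ₀ → sSup < τ
    intro hgt
    obtain ⟨a, haS, haEq⟩ := hmem
    rw [← haEq]
    by_contra hcon
    push_neg at hcon
    set α : ℝ := (inner ℝ a t : ℝ) with hα_def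
    have hαδ : δ ≤ α := haS.1
    have ha1 : ‖a‖ ≤ 1 := haS.2
    have hα_abs : |α| ≤ 1 := by
      have h1 := abs_real_inner_le_norm a t
      rw [ht, mul_one] at h1
      exact h1.trans ha1
    have hα1 : -1 ≤ α := (abs_le.1 hα_abs).1
    have hα2 : α ≤ 1 := (abs_le.1 hα_abs).2
    have hcw : c = s • t + w := by rw [hw_def]; abel
    have hac : (inner ℝ a c : ℝ) = s * α + (inner ℝ a w : ℝ) := by
      rw [hcw, inner_add_right, real_inner_smul_right, ← hα_def]
    have haw : (inner ℝ a w : ℝ) ≤ Real.sqrt (1 - α^2) * k := by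
      have h1 : (inner ℝ a w : ℝ) = (inner ℝ (a - α • t) w : ℝ) := by
        rw [inner_sub_left, real_inner_smul_left, htw]; ring
      have h2 : (inner ℝ (a - α • t) w : ℝ) ≤ ‖a - α • t‖ * ‖w‖ := real_inner_le_norm _ _
      have h3 : ‖a - α • t‖^2 ≤ 1 - α^2 := by
        rw [norm_sub_sq_real, real_inner_smul_right, ← hα_def, norm_smul, ht, Real.norm_eq_abs]
        rw [mul_one, sq_abs]
        have hna : ‖a‖^2 ≤ 1 := by
          have := mul_le_one₀ ha1 (norm_nonneg a) ha1
          calc ‖a‖^2 = ‖a‖*‖a‖ := sq (‖a‖) ▸ (pow_two (‖a‖))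
          _ ≤ 1 := this
        linarith
      have h4 : ‖a - α • t‖ ≤ Real.sqrt (1 - α^2) := by
        calc ‖a - α • t‖ = Real.sqrt (‖a - α • t‖^2) := (Real.sqrt_sq (norm_nonneg _)).symm
        _ ≤ Real.sqrt (1 - α^2) := Real.sqrt_le_sqrt h3
      calc (inner ℝ a w : ℝ) ≤ ‖a - α • t‖ * ‖w‖ := h1 ▸ h2
      _ ≤ Real.sqrt (1 - α^2) * k := by
          rw [hww]
          exact mul_le_mul_of_nonneg_right h4 hk0
    have hf : τ ≤ s*α + k*Real.sqrt (1-α^2) := by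
      rw [hac] at hcon; linarith [hcon]
    have hkey := jdt_key n s τ k l α hn hk0 hl0 hk2 hl2 hτ₁ hα1 hα2 hf
    have hgt' : s*τ + k*l < n^2 * δ := by
      rw [gt_iff_lt, div_lt_iff₀ (by positivity : (0:ℝ) < n^2)] at hgt
      linarith
    have := mul_le_mul_of_nonneg_left hαδ (by positivity : (0:ℝ) ≤ n^2)
    linarith
end

section
/- Let A ∈ R^{m×n} with columns a_i, y ∈ R^m, λ > 0, and let x* ≥ 0 minimize P(x) = (1/2)‖y - Ax‖² + λ‖x‖₁ over the nonnegative orthant. Define θ* = (y - Ax*)/λ. If G ⊆ R^m and R ⊆ R^m is any set containing θ* such that sup_{a ∈ G} sup_{θ ∈ R} ⟨a, θ⟩ < 1, then x*(i) = 0 for every index i with a_i ∈ G. -/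
theorem joint_screening_safe (m n : ℕ) (a : Fin n → EuclideanSpace ℝ (Fin m))
    (y : EuclideanSpace ℝ (Fin m)) (lam : ℝ) (hlam : 0 < lam)
    (x : Fin n → ℝ) (hx : ∀ i, 0 ≤ x i)
    (hmin : ∀ x' : Fin n → ℝ, (∀ i, 0 ≤ x' i) →
      (1 / 2) * ‖y - ∑ i, x i • a i‖ ^ 2 + lam * ∑ i, |x i| ≤
        (1 / 2) * ‖y - ∑ i, x' i • a i‖ ^ 2 + lam * ∑ i, |x' i|)
    (G R : Set (EuclideanSpace ℝ (Fin m)))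
    (hθR : lam⁻¹ • (y - ∑ i, x i • a i) ∈ R)
    (hsup : (⨆ aa ∈ G, ⨆ θ ∈ R, ((inner ℝ aa θ : ℝ) : EReal)) < 1) :
    ∀ i, a i ∈ G → x i = 0 := by
  intro i hiG
  by_contra hne
  have hxi : 0 < x i := lt_of_le_of_ne (hx i) (Ne.symm hne)
  set r : EuclideanSpace ℝ (Fin m) := y - ∑ j, x j • a j with hr
  set c : ℝ := inner ℝ r (a i) with hc
  -- Step 1 (KKT-type inequality): lam * t ≤ t * c + t^2/2 * ‖a i‖^2 for small t
  have key : ∀ t : ℝ, 0 < t → t ≤ x i → lam * t ≤ t * c + t ^ 2 / 2 * ‖a i‖ ^ 2 := by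
    intro t ht htle
    have hx' : ∀ j, 0 ≤ x j - t * (if j = i then 1 else 0) := by
      intro j
      by_cases hj : j = i
      · simp [hj]; linarith
      · simp [hj, hx j]
    have hm := hmin (fun j => x j - t * (if j = i then 1 else 0)) hx'
    have hsum1 : ∑ j, (x j - t * (if j = i then 1 else 0)) • a j
        = (∑ j, x j • a j) - t • a i := by
      have h1 : ∀ j ∈ Finset.univ, (x j - t * (if j = i then 1 else 0)) • a j
          = x j • a j - (if j = i then t • a i else 0) := by
        intro j _
        by_cases hj : j = i <;> simp [hj, sub_smul]
      rw [Finset.sum_congr rfl h1, Finset.sum_sub_distrib]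
      simp
    have hy' : y - ∑ j, (x j - t * (if j = i then 1 else 0)) • a j = r + t • a i := by
      rw [hsum1, hr]; abel
    have habs1 : ∑ j, |x j| = ∑ j, x j :=
      Finset.sum_congr rfl fun j _ => abs_of_nonneg (hx j)
    have habs2 : ∑ j, |x j - t * (if j = i then 1 else 0)| = (∑ j, x j) - t := by
      have h2 : ∀ j ∈ Finset.univ, |x j - t * (if j = i then 1 else 0)|
          = x j - (if j = i then t else 0) := by
        intro j _
        by_cases hj : j = i
        · subst hj; rw [if_pos rfl, if_pos rfl, mul_one]
          exact abs_of_nonneg (by linarith)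
        · simp [hj, abs_of_nonneg (hx j)]
      rw [Finset.sum_congr rfl h2, Finset.sum_sub_distrib]
      simp
    have hnorm : ‖r + t • a i‖ ^ 2 = ‖r‖ ^ 2 + 2 * (t * c) + t ^ 2 * ‖a i‖ ^ 2 := by
      rw [norm_add_sq_real, real_inner_smul_right, norm_smul]
      simp [mul_pow, sq_abs, hc]
    rw [hy', habs1, habs2, hnorm] at hm
    nlinarith [hm]
  -- Step 2: lam ≤ c
  have hcl : lam ≤ c := by
    by_contra h
    push_neg at h
    set N : ℝ := ‖a i‖ ^ 2 with hN
    have hN0 : 0 ≤ N := sq_nonneg _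
    set t0 : ℝ := min (x i) ((lam - c) / (N + 1)) with ht0def
    have ht0pos : 0 < t0 := lt_min hxi (div_pos (by linarith) (by linarith))
    have ht0le : t0 ≤ x i := min_le_left _ _
    have ht0le2 : t0 * (N + 1) ≤ lam - c := by
      have := min_le_right (x i) ((lam - c) / (N + 1))
      rw [ht0def]
      calc min (x i) ((lam - c) / (N + 1)) * (N + 1)
          ≤ (lam - c) / (N + 1) * (N + 1) := by
            apply mul_le_mul_of_nonneg_right this (by linarith)
        _ = lam - c := div_mul_cancel₀ _ (by linarith)
    have hk := key t0 ht0pos ht0le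
    nlinarith [mul_pos ht0pos (sub_pos.mpr h), sq_nonneg t0]
  -- Step 3: contradiction with the sup bound
  set θ : EuclideanSpace ℝ (Fin m) := lam⁻¹ • r with hθ
  have h1 : ((inner ℝ (a i) θ : ℝ) : EReal) ≤ ⨆ θ' ∈ R, ((inner ℝ (a i) θ' : ℝ) : EReal) :=
    le_iSup₂ (f := fun θ' (_ : θ' ∈ R) => ((inner ℝ (a i) θ' : ℝ) : EReal)) θ hθR
  have h2 : (⨆ θ' ∈ R, ((inner ℝ (a i) θ' : ℝ) : EReal))
      ≤ ⨆ aa ∈ G, ⨆ θ' ∈ R, ((inner ℝ aa θ' : ℝ) : EReal) :=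
    le_iSup₂ (f := fun aa (_ : aa ∈ G) => ⨆ θ' ∈ R, ((inner ℝ aa θ' : ℝ) : EReal)) (a i) hiG
  have h3 : ((inner ℝ (a i) θ : ℝ) : EReal) < ((1 : ℝ) : EReal) := by
    have := lt_of_le_of_lt (le_trans h1 h2) hsup
    simpa using this
  have h4 : (inner ℝ (a i) θ : ℝ) < 1 := by exact_mod_cast h3
  have h5 : (inner ℝ (a i) θ : ℝ) = lam⁻¹ * c := by
    rw [hθ, real_inner_smul_right, hc, real_inner_comm]
  rw [h5] at h4
  have : c < lam := by
    have := (mul_lt_mul_iff_right₀ hlam).mpr h4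
    rw [mul_one, ← mul_assoc, mul_inv_cancel₀ hlam.ne', one_mul] at this
    exact this
  linarith
end
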